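/- For t > 0 define P_t(z) = z³ + 3√t·z² + 2(1 − t√t). Let t, t′ ∈ (0, ∞) and suppose there exist real numbers α ≠ 0 and β ≠ 0 such that P_{t′}(z) = β⁶ · P_t( (α/β³)·z ) for all z ∈ ℝ. Then α² = β² = 1 and t = t′. -/

import Mathlib

noncomputable section

/-- Rigidity of the coefficient polynomials `P_t(z) = z³ + 3√t·z² + 2(1 − t√t)` of the family
`A_t` under the scaling ambiguity `P_{t′}(z) = β⁶·P_t((α/β³)·z)`. -/
theorem stmt12 (t t' : ℝ) (ht : 0 < t) (ht' : 0 < t') (α β : ℝ) (hα : α ≠ 0) (hβ : β ≠ 0)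
    (h : ∀ z : ℝ,
      z ^ 3 + 3 * Real.sqrt t' * z ^ 2 + 2 * (1 - t' * Real.sqrt t') =
        β ^ 6 * ((α / β ^ 3 * z) ^ 3 + 3 * Real.sqrt t * (α / β ^ 3 * z) ^ 2 +
          2 * (1 - t * Real.sqrt t))) :
    α ^ 2 = 1 ∧ β ^ 2 = 1 ∧ t = t' := by
  set s := Real.sqrt t with hs
  set s' := Real.sqrt t' with hs'
  have hst : s ^ 2 = t := Real.sq_sqrt ht.le
  have hst' : s' ^ 2 = t' := Real.sq_sqrt ht'.le
  have h0 := h 0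
  have h1 := h 1
  have hm := h (-1)
  field_simp at h0 h1 hm
  have key1 : α ^ 3 * β ^ 12 = β ^ 3 * β ^ 12 := by linear_combination -β ^ 12 * (h1 - hm) / 2
  have e1 : α ^ 3 = β ^ 3 := mul_right_cancel₀ (pow_ne_zero 12 hβ) key1
  have hab : α = β := Odd.strictMono_pow (R := ℝ) (⟨1, by norm_num⟩ : Odd 3) |>.injective e1
  have key2 : s' * β ^ 15 = s * α ^ 2 * β ^ 15 := by
    linear_combination β ^ 12 * ((h1 + hm) - 2 * h0) / 6
  have e2 : s' = s * α ^ 2 := mul_right_cancel₀ (pow_ne_zero 15 hβ) key2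
  have e3 : 1 - t' * s' = β ^ 6 * (1 - t * s) := mul_right_cancel₀ (pow_ne_zero 3 hβ) (by linear_combination h0 / 2)
  subst hab
  have ht's' : t' * s' = α ^ 6 * (t * s) := by rw [← hst', ← hst, e2]; ring
  have ha6 : α ^ 6 = 1 := by linear_combination -e3 - ht's'
  have ha0 : 0 < α ^ 2 := by positivity
  have ha2 : α ^ 2 = 1 := by nlinarith [ha6, sq_nonneg (α ^ 2 - 1), sq_nonneg (α ^ 2 + 1)]
  refine ⟨ha2, ha2, ?_⟩
  have hss : s = s' := by rw [e2, ha2]; ring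
  rw [← hst, ← hst', hss]
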